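/- Let K be a non-trivial complete quasivariety of topological E-algebras of countable discrete signature E, and let L ⊆ E be a compact (equivalently, finite) subset. Then for every n ∈ ω there exists d ∈ ℕ such that for every compact Hausdorff space X and every element a ∈ ⟨η(X)⟩^L_n ⊆ F_K(X) there is a subset A ⊆ X with |A| ≤ d and a ∈ ⟨η(A)⟩^L_n. (That is, the functor ⟨·⟩^L_n has finite degree.) -/

import Mathlib

open Set Topology TopologicalSpace

universe u v

/-- A topological algebra over the continuous signature `E = ⊕ₙ Eₙ`:
a topological space with continuous operations `Eₙ × Xⁿ → X`. -/
structure TopAlg (E : ℕ → Type u) [∀ n, TopologicalSpace (E n)] : Type (u + 1) where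
  carrier : Type u
  [top : TopologicalSpace carrier]
  op : ∀ n, E n → (Fin n → carrier) → carrier
  cont : ∀ n, Continuous fun p : E n × (Fin n → carrier) => op n p.1 p.2

attribute [instance] TopAlg.top

variable {E : ℕ → Type u} [∀ n, TopologicalSpace (E n)]

/-- `h` is an `E`-homomorphism of topological `E`-algebras. -/
def IsHomE (X Y : TopAlg E) (h : X.carrier → Y.carrier) : Prop :=
  ∀ (n : ℕ) (z : E n) (v : Fin n → X.carrier), h (X.op n z v) = Y.op n z fun i => h (v i)

/-- A subset is a subalgebra if it is closed under all the operations. -/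
def IsSubalg (X : TopAlg E) (A : Set X.carrier) : Prop :=
  ∀ (n : ℕ) (z : E n) (v : Fin n → X.carrier), (∀ i, v i ∈ A) → X.op n z v ∈ A

/-- The subalgebra `A` of `X`, as a topological `E`-algebra with the subspace topology. -/
def subAlg (X : TopAlg E) (A : Set X.carrier) (hA : IsSubalg X A) : TopAlg E where
  carrier := A
  op n z v := ⟨X.op n z fun i => (v i).1, hA n z _ fun i => (v i).2⟩
  cont n := by
    apply Continuous.subtype_mk
    exact (X.cont n).comp (continuous_fst.prodMk (continuous_pi fun i =>
      continuous_subtype_val.comp ((continuous_apply i).comp continuous_snd)))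

/-- The Tychonov product of a family of topological `E`-algebras. -/
def prodAlg {ι : Type u} (X : ι → TopAlg E) : TopAlg E where
  carrier := ∀ i, (X i).carrier
  op n z v i := (X i).op n z fun j => v j i
  cont n := continuous_pi fun i => ((X i).cont n).comp
    (continuous_fst.prodMk (continuous_pi fun j =>
      (continuous_apply i).comp ((continuous_apply j).comp continuous_snd)))

/-- A Tychonov space: completely regular and Hausdorff. -/
def Tychonov (X : Type v) [TopologicalSpace X] : Prop :=
  CompletelyRegularSpace X ∧ T2Space X

/-- A complete quasivariety: closed under subalgebras, Tychonov products,
and under algebraic isomorphisms having Tychonov domain. -/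
def IsCompleteQuasivariety (K : Set (TopAlg E)) : Prop :=
  (∀ X ∈ K, ∀ (A : Set X.carrier) (hA : IsSubalg X A), subAlg X A hA ∈ K) ∧
  (∀ (ι : Type u) (X : ι → TopAlg E), (∀ i, X i ∈ K) → prodAlg X ∈ K) ∧
  (∀ X : TopAlg E, Tychonov X.carrier →
    (∃ Y ∈ K, ∃ h : X.carrier → Y.carrier, Function.Bijective h ∧ IsHomE X Y h ∧
      ∃ g : Y.carrier → X.carrier, Function.LeftInverse g h ∧ Function.RightInverse g h ∧
        IsHomE Y X g) → X ∈ K)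

/-- `K` is a non-trivial class: some member has more than one point. -/
def NontrivialClass (K : Set (TopAlg E)) : Prop :=
  ∃ X ∈ K, ∃ a b : X.carrier, a ≠ b

/-- `(F, η)` is a free topological `E`-algebra over `X` in the class `K`. -/
def IsFreeAlg (K : Set (TopAlg E)) (X : Type u) [TopologicalSpace X]
    (F : TopAlg E) (η : X → F.carrier) : Prop :=
  F ∈ K ∧ Continuous η ∧ ∀ Y ∈ K, ∀ f : X → Y.carrier, Continuous f →
    ∃! h : F.carrier → Y.carrier, (Continuous h ∧ IsHomE F Y h) ∧ f = h ∘ η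

/-- The sets `⟨Z⟩ᴸₙ`: iterated application of the operations with parameters in `L`
to the elements of `Z`. -/
def hullSeq (X : TopAlg E) (L : Set (Σ n, E n)) (Z : Set X.carrier) : ℕ → Set X.carrier
  | 0 => Z
  | n + 1 => hullSeq X L Z n ∪
      ⋃ k, (fun p : E k × (Fin k → X.carrier) => X.op k p.1 p.2) ''
        {p | (⟨k, p.1⟩ : Σ n, E n) ∈ L ∧ ∀ i, p.2 i ∈ hullSeq X L Z n}

/-- A `k_ω`-sequence for `X`. -/
def IsKOmegaSeq (X : Type v) [TopologicalSpace X] (C : ℕ → Set X) : Prop :=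
  (∀ n, IsCompact (C n)) ∧ Monotone C ∧ (⋃ n, C n) = Set.univ ∧
    ∀ U : Set X, IsOpen U ↔ ∀ n, IsOpen ((Subtype.val ⁻¹' U : Set (C n)))

/-- A `k_ω`-space: a Hausdorff space which is the direct limit of a `k_ω`-sequence. -/
def IsKOmega (X : Type v) [TopologicalSpace X] : Prop :=
  T2Space X ∧ ∃ C : ℕ → Set X, IsKOmegaSeq X C

/-- A space is submetrizable if its topology is finer than some metrizable topology. -/
def Submetrizable (X : Type v) [t : TopologicalSpace X] : Prop :=
  ∃ m : TopologicalSpace X, t ≤ m ∧ @MetrizableSpace X m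

/-- `X` is an absolute neighborhood extensor for the class of spaces satisfying `P`. -/
def IsANEFor (X : Type u) [TopologicalSpace X]
    (P : (A : Type v) → TopologicalSpace A → Prop) : Prop :=
  ∀ (A : Type v) [tA : TopologicalSpace A], P A tA → ∀ B : Set A, IsClosed B →
    ∀ f : B → X, Continuous f → ∃ N : Set A, IsOpen N ∧ B ⊆ N ∧
      ∃ g : N → X, Continuous g ∧ ∀ (a : A) (hB : a ∈ B) (hN : a ∈ N), g ⟨a, hN⟩ = f ⟨a, hB⟩

/-- `X` is an `ANR(k_ω)`-space: whenever `X` is embedded as a closed subspace of a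
`k_ω`-space, it is a retract of a neighborhood. -/
def IsANRkw (X : Type u) [TopologicalSpace X] : Prop :=
  IsKOmega X ∧ ∀ (Y : Type v) [TopologicalSpace Y], IsKOmega Y →
    ∀ e : X → Y, IsClosedEmbedding e →
      ∃ N : Set Y, (∀ y ∈ Set.range e, N ∈ nhds y) ∧
        ∃ r : N → Y, Continuous r ∧ (∀ z : N, r z ∈ Set.range e) ∧
          ∀ z : N, (z : Y) ∈ Set.range e → r z = (z : Y)

/-- The functor `⟨·⟩ᴸₙ` has finite degree: there is `d` such that every element of
`⟨η(X)⟩ᴸₙ` lies in `⟨η(A)⟩ᴸₙ` for some subset `A ⊆ X` with at most `d` elements. -/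


lemma ncard_iUnion_fin_le {α : Type*} :
    ∀ (k : ℕ) (W : Fin k → Set α), (⋃ i, W i).ncard ≤ ∑ i, (W i).ncard := by
  intro k
  induction k with
  | zero => intro W; simp
  | succ k ih =>
    intro W
    have : (⋃ i, W i) = W 0 ∪ ⋃ i : Fin k, W i.succ := by
      ext x; simp [Fin.exists_fin_succ]
    rw [this, Fin.sum_univ_succ]
    exact le_trans (Set.ncard_union_le _ _) (Nat.add_le_add_left (ih _) _)

lemma hullSeq_mono (X : TopAlg E) (L : Set (Σ n, E n)) {Z Z' : Set X.carrier}
    (h : Z ⊆ Z') : ∀ n, hullSeq X L Z n ⊆ hullSeq X L Z' n := by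
  intro n
  induction n with
  | zero => exact h
  | succ n ih =>
    intro a ha
    rcases ha with ha | ha
    · exact Or.inl (ih ha)
    · right
      simp only [Set.mem_iUnion, Set.mem_image] at ha ⊢
      obtain ⟨k, p, ⟨hp1, hp2⟩, hpa⟩ := ha
      exact ⟨k, p, ⟨hp1, fun i => ih (hp2 i)⟩, hpa⟩

lemma hull_small (X : TopAlg E) (L : Set (Σ n, E n)) (m : ℕ) (hm : 1 ≤ m)
    (hLm : ∀ p : Σ n, E n, p ∈ L → p.1 ≤ m) :
    ∀ (n : ℕ) (Z : Set X.carrier), ∀ a ∈ hullSeq X L Z n,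
      ∃ W ⊆ Z, W.Finite ∧ W.ncard ≤ m ^ n ∧ a ∈ hullSeq X L W n := by
  intro n
  induction n with
  | zero =>
    intro Z a ha
    refine ⟨{a}, Set.singleton_subset_iff.2 ha, Set.finite_singleton a, ?_, rfl⟩
    simp
  | succ n ih =>
    intro Z a ha
    rcases ha with ha | ha
    · obtain ⟨W, hWZ, hWf, hWc, hWa⟩ := ih Z a ha
      refine ⟨W, hWZ, hWf, le_trans hWc ?_, Or.inl hWa⟩
      exact Nat.pow_le_pow_right hm (Nat.le_succ n)
    · simp only [Set.mem_iUnion, Set.mem_image] at ha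
      obtain ⟨k, p, ⟨hp1, hp2⟩, hpa⟩ := ha
      choose W hWZ hWf hWc hWa using fun i => ih Z (p.2 i) (hp2 i)
      refine ⟨⋃ i, W i, Set.iUnion_subset hWZ, Set.finite_iUnion hWf, ?_, ?_⟩
      · calc (⋃ i, W i).ncard ≤ ∑ i : Fin k, (W i).ncard := ncard_iUnion_fin_le k W
          _ ≤ ∑ _i : Fin k, m ^ n := Finset.sum_le_sum fun i _ => hWc i
          _ = k * m ^ n := by simp [Finset.sum_const, Finset.card_univ]
          _ ≤ m * m ^ n := Nat.mul_le_mul_right _ (hLm _ hp1)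
          _ = m ^ (n + 1) := by ring
      · right
        simp only [Set.mem_iUnion, Set.mem_image]
        refine ⟨k, p, ⟨hp1, fun i => hullSeq_mono X L (Set.subset_iUnion W i) n (hWa i)⟩, hpa⟩

theorem hull_functor_finite_degree
    (E : ℕ → Type u) [∀ n, TopologicalSpace (E n)]
    (hEd : DiscreteTopology (Σ n, E n)) (hEc : Countable (Σ n, E n))
    (K : Set (TopAlg E)) (hK : IsCompleteQuasivariety K) (hnt : NontrivialClass K)
    (L : Set (Σ n, E n)) (hL : IsCompact L) (n : ℕ) :
    ∃ d : ℕ, ∀ (X : Type u) [TopologicalSpace X] [CompactSpace X] [T2Space X],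
      ∀ (F : TopAlg E) (η : X → F.carrier), IsFreeAlg K X F η →
        ∀ a ∈ hullSeq F L (Set.range η) n,
          ∃ A : Set X, A.Finite ∧ A.ncard ≤ d ∧ a ∈ hullSeq F L (η '' A) n := by
  haveI := hEd
  have hLf : L.Finite := hL.finite_of_discrete
  obtain ⟨m0, hm0⟩ := (hLf.image Sigma.fst).bddAbove
  set m := max 1 m0 with hmdef
  have hm : 1 ≤ m := le_max_left _ _
  have hLm : ∀ p : Σ n, E n, p ∈ L → p.1 ≤ m := fun p hp =>
    le_trans (hm0 (Set.mem_image_of_mem _ hp)) (le_max_right _ _)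
  refine ⟨m ^ n, ?_⟩
  intro X _ _ _ F η hfree a ha
  obtain ⟨W, hWZ, hWf, hWc, hWa⟩ := hull_small F L m hm hLm n (Set.range η) a ha
  rcases W.eq_empty_or_nonempty with hWe | ⟨w0, hw0⟩
  · refine ⟨∅, Set.finite_empty, by simp, ?_⟩
    have : η '' (∅ : Set X) = ∅ := by simp
    rw [this, ← hWe]
    exact hWa
  · obtain ⟨x0, _⟩ := hWZ hw0
    haveI : Nonempty X := ⟨x0⟩
    have hchoice : ∀ w ∈ W, ∃ x : X, η x = w := fun w hw => hWZ hw
    choose! f hf using hchoice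
    refine ⟨f '' W, hWf.image f, ?_, ?_⟩
    · exact le_trans (Set.ncard_image_le hWf) hWc
    · have hsub : W ⊆ η '' (f '' W) := by
        intro w hw
        exact ⟨f w, Set.mem_image_of_mem f hw, hf w hw⟩
      exact hullSeq_mono F L hsub n hWa
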